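/- Let n ≥ 2 and let k be any natural number. Then n divides the number of order-n Latin squares whose inner distance equals k. -/
import Mathlib


/-- Distance between two symbols of `ZMod n`: the minimum of the two cyclic differences. -/
def zdist {n : ℕ} (a b : ZMod n) : ℕ := min (a - b).val (b - a).val

/-- An order-`n` Latin square: every row and every column is injective. -/
def IsLatin (n : ℕ) (L : Fin n → Fin n → ZMod n) : Prop :=
  (∀ i, Function.Injective (L i)) ∧ ∀ j, Function.Injective fun i => L i j

/-- The inner distance of a square: the minimum of `zdist` over all pairs of
horizontally or vertically adjacent cells. -/
noncomputable def innerDist (n : ℕ) (L : Fin n → Fin n → ZMod n) : ℕ :=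
  sInf { d : ℕ |
    (∃ i : Fin n, ∃ j : ℕ, ∃ hj : j + 1 < n,
      d = zdist (L i ⟨j, Nat.lt_of_succ_lt hj⟩) (L i ⟨j + 1, hj⟩)) ∨
    (∃ j : Fin n, ∃ i : ℕ, ∃ hi : i + 1 < n,
      d = zdist (L ⟨i, Nat.lt_of_succ_lt hi⟩ j) (L ⟨i + 1, hi⟩ j)) }

lemma zdist_shift {n : ℕ} (a b c : ZMod n) : zdist (a + c) (b + c) = zdist a b := by
  simp [zdist, add_sub_add_right_eq_sub]

lemma isLatin_shift {n : ℕ} (L : Fin n → Fin n → ZMod n) (c : ZMod n)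
    (h : IsLatin n L) : IsLatin n (fun i j => L i j + c) := by
  obtain ⟨h1, h2⟩ := h
  constructor
  · intro i x y hxy
    exact h1 i (by simpa using add_right_cancel hxy)
  · intro j x y hxy
    exact h2 j (by simpa using add_right_cancel hxy)

lemma innerDist_shift {n : ℕ} (L : Fin n → Fin n → ZMod n) (c : ZMod n) :
    innerDist n (fun i j => L i j + c) = innerDist n L := by
  unfold innerDist
  congr 1
  ext d
  simp only [Set.mem_setOf_eq, zdist_shift]

theorem stmt5 (n : ℕ) (hn : 2 ≤ n) (k : ℕ) :
    n ∣ {L : Fin n → Fin n → ZMod n | IsLatin n L ∧ innerDist n L = k}.ncard := by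
  have hz : 0 < n := by omega
  set S := {L : Fin n → Fin n → ZMod n | IsLatin n L ∧ innerDist n L = k} with hS
  set T := {L : Fin n → Fin n → ZMod n |
    (IsLatin n L ∧ innerDist n L = k) ∧ L ⟨0, hz⟩ ⟨0, hz⟩ = 0} with hT
  let e : ZMod n × T ≃ S :=
  { toFun := fun p => ⟨fun i j => p.2.1 i j + p.1, by
      obtain ⟨⟨h1, h2⟩, _⟩ := p.2.2
      exact ⟨isLatin_shift _ _ h1, by rw [innerDist_shift]; exact h2⟩⟩
    invFun := fun L => ⟨L.1 ⟨0, hz⟩ ⟨0, hz⟩,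
      ⟨fun i j => L.1 i j - L.1 ⟨0, hz⟩ ⟨0, hz⟩, by
        obtain ⟨h1, h2⟩ := L.2
        refine ⟨⟨?_, ?_⟩, sub_self _⟩
        · simpa [sub_eq_add_neg] using
            isLatin_shift L.1 (-(L.1 ⟨0, hz⟩ ⟨0, hz⟩)) h1
        · rw [show (fun i j => L.1 i j - L.1 ⟨0, hz⟩ ⟨0, hz⟩) =
              fun i j => L.1 i j + (-(L.1 ⟨0, hz⟩ ⟨0, hz⟩)) by
                funext i j; ring]
          rw [innerDist_shift]; exact h2⟩⟩
    left_inv := by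
      rintro ⟨c, L, hL⟩
      have h0 : L ⟨0, hz⟩ ⟨0, hz⟩ = 0 := hL.2
      refine Prod.ext ?_ ?_
      · simp [h0]
      · ext i j
        simp [h0]
    right_inv := by
      rintro ⟨L, hL⟩
      ext i j
      simp }
  have hcard : S.ncard = n * T.ncard := by
    rw [← Nat.card_coe_set_eq, ← Nat.card_coe_set_eq, ← Nat.card_congr e,
      Nat.card_prod, Nat.card_zmod]
  rw [hcard]
  exact Dvd.intro _ rfl
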